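/- Define integers μ_n^{(k)} for all n ≥ 0 and k ≥ 1 by μ_0^{(k)} = 1 and, for n ≥ 1, μ_n^{(k)} = (k−1)·μ_{n−1}^{(k+1)} + k·Σ_{j=2}^{n} (∏_{s=1}^{j−1} (n−s))·μ_{n−j}^{(k+j)}. Then for all n ≥ 0 and k ≥ 1, μ_n^{(k)} = H_n(n+k−1) − n·H_{n−1}(n+k−1). (The paper shows that μ_n^{(k)} is the Möbius coinvariant of the graph K_n^{(k)}, the complete graph K_n with an extra root vertex joined to each of the n vertices by k parallel edges.) -/

import Mathlib

open Polynomial Finset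

/-- The Hermite polynomial `H_n(x) ∈ ℤ[x]`, defined by `H_{-1} = 0`, `H_0 = 1` and
`H_{n+1}(x) = x·H_n(x) + n·H_{n-1}(x)` (so `H_1 = X`). -/
noncomputable def hermiteH : ℕ → Polynomial ℤ
  | 0 => 1
  | 1 => X
  | (n + 2) => X * hermiteH (n + 1) + C ((n : ℤ) + 1) * hermiteH n

/-- The integers `μ_n^{(k)}`, defined by `μ_0^{(k)} = 1` and, for `n ≥ 1`,
`μ_n^{(k)} = (k−1)·μ_{n−1}^{(k+1)} + k·Σ_{j=2}^{n} ((n−1)(n−2)⋯(n−j+1))·μ_{n−j}^{(k+j)}`.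
(They are the Möbius coinvariants of the rooted complete graphs `K_n^{(k)}`.) -/
noncomputable def muK : ℕ → ℕ → ℤ
  | 0, _ => 1
  | (n + 1), k =>
      ((k : ℤ) - 1) * muK n (k + 1) +
        (k : ℤ) * ∑ j ∈ (Finset.Icc 2 (n + 1)).attach,
          (∏ s ∈ Finset.Icc 1 (j.1 - 1), (((n : ℤ) + 1) - (s : ℤ))) * muK (n + 1 - j.1) (k + j.1)
  termination_by n _ => n
  decreasing_by
  · omega
  · have hj := j.2
    simp only [Finset.mem_Icc] at hj
    omega

noncomputable def Ssum (n k : ℕ) : ℤ :=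
  ∑ j ∈ Finset.Icc 2 (n + 1),
    (∏ s ∈ Finset.Icc 1 (j - 1), (((n : ℤ) + 1) - (s : ℤ))) * muK (n + 1 - j) (k + j)

lemma icc_shift_sum (m : ℕ) (f : ℕ → ℤ) :
    ∑ j ∈ Finset.Icc 2 (m + 1), f j = ∑ i ∈ Finset.Icc 1 m, f (i + 1) := by
  rw [← Finset.map_add_right_Icc 1 m 1, Finset.sum_map]
  rfl

lemma icc_shift_prod (m : ℕ) (f : ℕ → ℤ) :
    ∏ j ∈ Finset.Icc 2 (m + 1), f j = ∏ i ∈ Finset.Icc 1 m, f (i + 1) := by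
  rw [← Finset.map_add_right_Icc 1 m 1, Finset.prod_map]
  rfl

lemma prod_split (i : ℕ) (hi : 1 ≤ i) (g : ℕ → ℤ) :
    ∏ s ∈ Finset.Icc 1 i, g s = g 1 * ∏ s ∈ Finset.Icc 2 i, g s := by
  rw [← Finset.mul_prod_Ioc_eq_prod_Icc hi]
  congr 1

lemma muK_succ (n k : ℕ) :
    muK (n + 1) k = ((k : ℤ) - 1) * muK n (k + 1) + (k : ℤ) * Ssum n k := by
  rw [muK, Ssum, Finset.sum_attach (Finset.Icc 2 (n+1))
    (fun j => (∏ s ∈ Finset.Icc 1 (j - 1), (((n : ℤ) + 1) - (s : ℤ))) * muK (n + 1 - j) (k + j))]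

lemma Ssum_succ (n k : ℕ) :
    Ssum (n + 1) k = ((n : ℤ) + 1) * (muK n (k + 2) + Ssum n (k + 1)) := by
  rw [Ssum, icc_shift_sum]
  push_cast
  have step : ∀ i ∈ Finset.Icc 1 (n + 1),
      (∏ s ∈ Finset.Icc 1 i, (((n : ℤ) + 1 + 1) - (s : ℤ))) * muK (n + 1 - i) (k + (i + 1))
        = ((n : ℤ) + 1) *
            ((∏ t ∈ Finset.Icc 1 (i - 1), (((n : ℤ) + 1) - (t : ℤ))) *
              muK (n + 1 - i) ((k + 1) + i)) := by
    intro i hi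
    simp only [Finset.mem_Icc] at hi
    obtain ⟨hi1, hi2⟩ := hi
    have h3 : k + (i + 1) = (k + 1) + i := by omega
    rw [h3, prod_split i hi1]
    have h4 : i = (i - 1) + 1 := by omega
    have h5 : ∏ s ∈ Finset.Icc 2 i, (((n : ℤ) + 1 + 1) - (s : ℤ)) =
        ∏ t ∈ Finset.Icc 1 (i - 1), (((n : ℤ) + 1) - (t : ℤ)) := by
      rw [h4, icc_shift_prod (i-1) (fun s => ((n : ℤ) + 1 + 1) - (s : ℤ))]
      apply Finset.prod_congr rfl
      intro t _
      push_cast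
      ring
    rw [h5]
    have h6 : ((n : ℤ) + 1 + 1) - ((1 : ℕ) : ℤ) = (n : ℤ) + 1 := by push_cast; ring
    rw [h6]
    ring
  rw [Finset.sum_congr rfl step]
  rw [← Finset.mul_sum]
  congr 1
  have h16 : (1:ℕ) ≤ n + 1 := by omega
  rw [Finset.Icc_eq_cons_Ioc h16, Finset.sum_cons, ← Finset.Icc_add_one_left_eq_Ioc]
  simp only [Finset.Icc_self, Finset.prod_empty, Nat.sub_self, one_mul]
  rw [Ssum]
  norm_num

lemma Ssum_zero (k : ℕ) : Ssum 0 k = 0 := by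
  simp [Ssum]

lemma muK_zero (k : ℕ) : muK 0 k = 1 := by
  simp [muK]

lemma hermite_eval (n : ℕ) (x : ℤ) :
    (hermiteH (n + 1)).eval x
      = x * (hermiteH n).eval x + (n : ℤ) * (hermiteH (n - 1)).eval x := by
  cases n with
  | zero => simp [hermiteH]
  | succ m =>
    simp only [hermiteH, Nat.add_sub_cancel, eval_add, eval_mul, eval_X, eval_C]
    push_cast
    ring

lemma key (n : ℕ) :
    (∀ k : ℕ, 1 ≤ k → muK n k =
        (hermiteH n).eval ((n : ℤ) + (k : ℤ) - 1) -
          (n : ℤ) * (hermiteH (n - 1)).eval ((n : ℤ) + (k : ℤ) - 1)) ∧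
      (∀ k : ℕ, Ssum n k = (hermiteH n).eval ((n : ℤ) + (k : ℤ)) - muK n (k + 1)) := by
  induction n with
  | zero =>
    constructor
    · intro k _
      simp [muK_zero, hermiteH]
    · intro k
      simp [Ssum_zero, muK_zero, hermiteH]
  | succ n ih =>
    obtain ⟨ihB, ihA⟩ := ih
    have hB : ∀ k : ℕ, 1 ≤ k → muK (n + 1) k =
        (hermiteH (n + 1)).eval (((n + 1 : ℕ) : ℤ) + (k : ℤ) - 1) -
          ((n + 1 : ℕ) : ℤ) *
            (hermiteH ((n + 1) - 1)).eval (((n + 1 : ℕ) : ℤ) + (k : ℤ) - 1) := by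
      intro k hk
      rw [muK_succ, ihA k, ihB (k + 1) (by omega), Nat.add_sub_cancel]
      have e2 : ((n + 1 : ℕ) : ℤ) + (k : ℤ) - 1 = (n : ℤ) + (k : ℤ) := by push_cast; ring
      have e1 : (n : ℤ) + ((k + 1 : ℕ) : ℤ) - 1 = (n : ℤ) + (k : ℤ) := by push_cast; ring
      rw [e2, e1, hermite_eval n ((n : ℤ) + (k : ℤ))]
      push_cast
      ring
    refine ⟨hB, ?_⟩
    intro k
    rw [Ssum_succ, ihA (k + 1), hB (k + 1) (by omega), Nat.add_sub_cancel]
    have e3 : muK n (k + 1 + 1) = muK n (k + 2) := by norm_num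
    rw [e3]
    have e4 : (n : ℤ) + ((k + 1 : ℕ) : ℤ) = (n : ℤ) + (k : ℤ) + 1 := by push_cast; ring
    have e5 : ((n + 1 : ℕ) : ℤ) + ((k + 1 : ℕ) : ℤ) - 1 = (n : ℤ) + (k : ℤ) + 1 := by
      push_cast; ring
    have e6 : ((n + 1 : ℕ) : ℤ) + (k : ℤ) = (n : ℤ) + (k : ℤ) + 1 := by push_cast; ring
    rw [e4, e5, e6]
    push_cast
    ring

/-- `μ_n^{(k)} = H_n(n+k−1) − n·H_{n−1}(n+k−1)` for all `n ≥ 0`, `k ≥ 1`. -/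
theorem muK_eq_hermiteH (n k : ℕ) (hk : 1 ≤ k) :
    muK n k =
      (hermiteH n).eval ((n : ℤ) + (k : ℤ) - 1) -
        (n : ℤ) * (hermiteH (n - 1)).eval ((n : ℤ) + (k : ℤ) - 1) := by
  exact (key n).1 k hk
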